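/- If (Σ, σ, γ) is a factorisation of χ and (M, X, ρ) is a right χ-coalgebra, then (ΣM, X, γM ∘ Σρ ∘ σM) is again a right χ-coalgebra. -/
import Mathlib


open CategoryTheory

universe v u

namespace BohmStefan

variable {A : Type u} [Category.{v} A]

/-- A distributive law `σ : TΣ ⟶ ΣT` between a comonad `Tm` and an endofunctor `S`,
with components `σ_X : T(S X) ⟶ S(T X)`. -/
def IsComonadEndoLaw (Tm : Comonad A) (S : A ⥤ A)
    (σ : S ⋙ (Tm : A ⥤ A) ⟶ (Tm : A ⥤ A) ⋙ S) : Prop :=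
  (∀ X : A, σ.app X ≫ S.map (Tm.δ.app X) =
      Tm.δ.app (S.obj X) ≫ (Tm : A ⥤ A).map (σ.app X) ≫ σ.app (Tm.obj X)) ∧
  (∀ X : A, σ.app X ≫ S.map (Tm.ε.app X) = Tm.ε.app (S.obj X))

/-- A distributive law `γ : ΣC ⟶ CΣ` between an endofunctor `S` and a comonad `Cm`,
with components `γ_X : S(C X) ⟶ C(S X)`. -/
def IsEndoComonadLaw (S : A ⥤ A) (Cm : Comonad A)
    (γ : (Cm : A ⥤ A) ⋙ S ⟶ S ⋙ (Cm : A ⥤ A)) : Prop :=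
  (∀ X : A, γ.app X ≫ Cm.δ.app (S.obj X) =
      S.map (Cm.δ.app X) ≫ γ.app (Cm.obj X) ≫ (Cm : A ⥤ A).map (γ.app X)) ∧
  (∀ X : A, γ.app X ≫ Cm.ε.app (S.obj X) = S.map (Cm.ε.app X))

/-- A comonad distributive law `χ : Tm ⟶ Cm`. -/
def IsComonadDistLaw (Tm Cm : Comonad A)
    (χ : (Cm : A ⥤ A) ⋙ (Tm : A ⥤ A) ⟶ (Tm : A ⥤ A) ⋙ (Cm : A ⥤ A)) : Prop :=
  IsComonadEndoLaw Tm (Cm : A ⥤ A) χ ∧ IsEndoComonadLaw (Tm : A ⥤ A) Cm χ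

/-- The Yang-Baxter condition for `(S, σ, γ)` with respect to `χ`. -/
def IsYangBaxter (Tm Cm : Comonad A)
    (χ : (Cm : A ⥤ A) ⋙ (Tm : A ⥤ A) ⟶ (Tm : A ⥤ A) ⋙ (Cm : A ⥤ A)) (S : A ⥤ A)
    (σ : S ⋙ (Tm : A ⥤ A) ⟶ (Tm : A ⥤ A) ⋙ S)
    (γ : (Cm : A ⥤ A) ⋙ S ⟶ S ⋙ (Cm : A ⥤ A)) : Prop :=
  ∀ X : A, σ.app (Cm.obj X) ≫ S.map (χ.app X) ≫ γ.app (Tm.obj X) =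
    (Tm : A ⥤ A).map (γ.app X) ≫ χ.app (S.obj X) ≫ (Cm : A ⥤ A).map (σ.app X)

/-- `(S, σ, γ)` is a factorisation of the distributive law `χ : Tm ⟶ Cm`. -/
def IsFactorisation (Tm Cm : Comonad A)
    (χ : (Cm : A ⥤ A) ⋙ (Tm : A ⥤ A) ⟶ (Tm : A ⥤ A) ⋙ (Cm : A ⥤ A)) (S : A ⥤ A)
    (σ : S ⋙ (Tm : A ⥤ A) ⟶ (Tm : A ⥤ A) ⋙ S)
    (γ : (Cm : A ⥤ A) ⋙ S ⟶ S ⋙ (Cm : A ⥤ A)) : Prop :=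
  IsComonadEndoLaw Tm S σ ∧ IsEndoComonadLaw S Cm γ ∧ IsYangBaxter Tm Cm χ S σ γ


/-- A right `χ`-coalgebra `(M, 𝒳, ρ)` for a comonad distributive law `χ : Tm ⟶ Cm`. -/
def IsRightCoalgebra (Tm Cm : Comonad A)
    (χ : (Cm : A ⥤ A) ⋙ (Tm : A ⥤ A) ⟶ (Tm : A ⥤ A) ⋙ (Cm : A ⥤ A))
    {𝒳 : Type*} [Category 𝒳] (M : 𝒳 ⥤ A)
    (ρ : M ⋙ (Tm : A ⥤ A) ⟶ M ⋙ (Cm : A ⥤ A)) : Prop :=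
  (∀ Y : 𝒳, ρ.app Y ≫ Cm.δ.app (M.obj Y) =
      Tm.δ.app (M.obj Y) ≫ (Tm : A ⥤ A).map (ρ.app Y) ≫ χ.app (M.obj Y) ≫
        (Cm : A ⥤ A).map (ρ.app Y)) ∧
  (∀ Y : 𝒳, ρ.app Y ≫ Cm.ε.app (M.obj Y) = Tm.ε.app (M.obj Y))

/-- a factorisation `(S, σ, γ)` of `χ` acts on right `χ`-coalgebras:
`(ΣM, 𝒳, γM ∘ Σρ ∘ σM)` is again a right `χ`-coalgebra. -/
theorem act_isRightCoalgebra (Tm Cm : Comonad A)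
    (χ : (Cm : A ⥤ A) ⋙ (Tm : A ⥤ A) ⟶ (Tm : A ⥤ A) ⋙ (Cm : A ⥤ A))
    (hχ : IsComonadDistLaw Tm Cm χ)
    (S : A ⥤ A)
    (σ : S ⋙ (Tm : A ⥤ A) ⟶ (Tm : A ⥤ A) ⋙ S)
    (γ : (Cm : A ⥤ A) ⋙ S ⟶ S ⋙ (Cm : A ⥤ A))
    (h : IsFactorisation Tm Cm χ S σ γ)
    {𝒳 : Type*} [Category 𝒳] (M : 𝒳 ⥤ A)
    (ρ : M ⋙ (Tm : A ⥤ A) ⟶ M ⋙ (Cm : A ⥤ A))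
    (hρ : IsRightCoalgebra Tm Cm χ M ρ)
    (ρ₂ : (M ⋙ S) ⋙ (Tm : A ⥤ A) ⟶ (M ⋙ S) ⋙ (Cm : A ⥤ A))
    (hρ₂ : ∀ Y : 𝒳, ρ₂.app Y =
      σ.app (M.obj Y) ≫ S.map (ρ.app Y) ≫ γ.app (M.obj Y)) :
    IsRightCoalgebra Tm Cm χ (M ⋙ S) ρ₂ := by
  obtain ⟨⟨hσδ, hσε⟩, ⟨hγδ, hγε⟩, hYB⟩ := h
  obtain ⟨hρδ, hρε⟩ := hρ
  constructor
  · intro Y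
    have nσ := σ.naturality (ρ.app Y)
    have nγ := γ.naturality (ρ.app Y)
    simp only [Functor.comp_map, Functor.comp_obj] at nσ nγ
    rw [hρ₂ Y]
    simp only [Functor.comp_obj, Functor.map_comp, Category.assoc]
    rw [hγδ (M.obj Y)]
    slice_lhs 2 3 => rw [← S.map_comp, hρδ Y]
    simp only [Functor.map_comp, Category.assoc]
    slice_lhs 1 2 => rw [hσδ (M.obj Y)]
    simp only [Category.assoc]
    slice_lhs 3 4 => rw [← nσ]
    slice_lhs 6 7 => rw [nγ]
    slice_lhs 4 6 => rw [hYB (M.obj Y)]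
    simp only [Category.assoc]
  · intro Y
    rw [hρ₂ Y]
    simp only [Functor.comp_obj, Category.assoc]
    rw [hγε (M.obj Y), ← S.map_comp, hρε Y, hσε (M.obj Y)]

end BohmStefan
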